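/- Suppose for each customer j in a finite set W, exactly one variable x_{i,s,j,t} with target j equals 1, and for each vertex (i,s), the number of 1-valued variables entering (i,s) equals the number leaving (i,s). If additionally every 1-valued variable satisfies s < t, then the set of 1-valued variables, viewed as edges of a directed multigraph, decomposes into vertex-disjoint directed paths each starting at the origin depot 0 and ending at the final depot N, and these paths jointly visit every customer in W exactly once. -/

import Mathlib

/-- Node labels: `Sum.inl (Sum.inl ())` is the origin depot 0,
`Sum.inl (Sum.inr j)` is customer j ∈ W, and `Sum.inr ()` is the final depot N. -/
abbrev RouteNode (W : Type*) := Sum (Sum Unit W) Unit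

namespace ODIP

variable {W : Type*} {T : ℕ}

abbrev V (W : Type*) (T : ℕ) := RouteNode W × Fin T

def chain (nxt : V W T → Option (V W T)) : ℕ → V W T → List (V W T)
  | 0, _v => [_v]
  | n+1, v => v :: ((nxt v).elim [] (chain nxt n))

lemma chain_cons (nxt : V W T → Option (V W T)) (n v) :
    ∃ t, chain nxt n v = v :: t := by
  cases n <;> exact ⟨_, rfl⟩

lemma chain_ne_nil (nxt : V W T → Option (V W T)) (n v) : chain nxt n v ≠ [] := by
  obtain ⟨t, ht⟩ := chain_cons nxt n v; simp [ht]

lemma chain_head (nxt : V W T → Option (V W T)) (n v) :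
    (chain nxt n v).head? = some v := by
  obtain ⟨t, ht⟩ := chain_cons nxt n v; simp [ht]

lemma chain_mem_self (nxt : V W T → Option (V W T)) (n v) : v ∈ chain nxt n v := by
  obtain ⟨t, ht⟩ := chain_cons nxt n v; simp [ht]

lemma chain_chain' {R : V W T → V W T → Prop} {nxt : V W T → Option (V W T)}
    (hx : ∀ v u, nxt v = some u → R v u) (n : ℕ) (v : V W T) :
    List.Chain' R (chain nxt n v) := by
  induction n generalizing v with
  | zero => simp [chain]; exact List.isChain_singleton v
  | succ n ih =>
    cases h : nxt v with
    | none => simp [chain, h]; exact List.isChain_singleton v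
    | some u =>
      have := ih u
      obtain ⟨t, ht⟩ := chain_cons nxt n u
      simp only [chain, h, Option.elim]
      rw [ht] at this ⊢
      exact List.isChain_cons_cons.mpr ⟨hx v u h, this⟩

lemma chain_good {good : V W T → Prop} {nxt : V W T → Option (V W T)}
    (hg : ∀ v, good v → ∀ u, nxt v = some u → good u) (n : ℕ) {v : V W T}
    (hv : good v) : ∀ w ∈ chain nxt n v, good w := by
  induction n generalizing v with
  | zero => intro w hw; simp [chain] at hw; subst hw; exact hv
  | succ n ih =>
    intro w hw
    cases h : nxt v with
    | none => simp [chain, h] at hw; subst hw; exact hv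
    | some u =>
      simp only [chain, h, Option.elim, List.mem_cons] at hw
      rcases hw with rfl | hw
      · exact hv
      · exact ih (hg v hv u h) w hw

lemma chain_getLast {good : V W T → Prop} {nxt : V W T → Option (V W T)}
    (ht : ∀ v u, nxt v = some u → v.2 < u.2)
    (hstep : ∀ w, good w → w.1 ≠ Sum.inr () → ∃ u, nxt w = some u)
    (hNnone : ∀ v : V W T, v.1 = Sum.inr () → nxt v = none)
    (hg : ∀ v, good v → ∀ u, nxt v = some u → good u)
    (n : ℕ) : ∀ v : V W T, good v → T ≤ n + v.2.val →
    ∃ w, (chain nxt n v).getLast? = some w ∧ w.1 = Sum.inr () := by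
  induction n with
  | zero => intro v _ hT; exact absurd hT (by have := v.2.isLt; omega)
  | succ n ih =>
    intro v hv hT
    by_cases hN : v.1 = Sum.inr ()
    · exact ⟨v, by simp [chain, hNnone v hN], hN⟩
    · obtain ⟨u, hu⟩ := hstep v hv hN
      have hgu := hg v hv u hu
      have hlt := ht v u hu
      obtain ⟨w, hw, hwN⟩ := ih u hgu (by omega)
      refine ⟨w, ?_, hwN⟩
      obtain ⟨t, htc⟩ := chain_cons nxt n u
      simp only [chain, hu, Option.elim, htc] at hw ⊢
      rw [List.getLast?_cons_cons, hw]

lemma chain_suffix {nxt : V W T → Option (V W T)}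
    (ht : ∀ v u, nxt v = some u → v.2 < u.2) (n : ℕ) :
    ∀ v w : V W T, w ∈ chain nxt n v →
    ∃ m l₁, chain nxt n v = l₁ ++ chain nxt m w ∧ n + v.2.val ≤ m + w.2.val := by
  induction n with
  | zero =>
    intro v w hw; simp [chain] at hw; subst hw
    exact ⟨0, [], by simp, le_rfl⟩
  | succ n ih =>
    intro v w hw
    by_cases hvw : w = v
    · subst hvw; exact ⟨n+1, [], by simp, le_rfl⟩
    · cases h : nxt v with
      | none => simp [chain, h] at hw; exact absurd hw hvw
      | some u =>
        simp only [chain, h, Option.elim, List.mem_cons] at hw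
        rcases hw with rfl | hw
        · exact absurd rfl hvw
        · obtain ⟨m, l₁, hl, hle⟩ := ih u w hw
          refine ⟨m, v :: l₁, ?_, ?_⟩
          · simp only [chain, h, Option.elim, hl, List.cons_append]
          · have := ht v u h; omega

end ODIP

/-- If for each customer j exactly one 1-valued variable targets j
(coverage), flow is conserved at every customer vertex (i,s), no edge enters
depot 0, no edge leaves depot N, and every 1-valued variable goes strictly
forward in time, then the 1-valued variables decompose into directed paths,
each from depot 0 to depot N, pairwise sharing no vertex except possibly
depot-labeled ones, and jointly visiting every customer exactly once. -/
theorem ones_decompose_into_paths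
    {W : Type*} [Fintype W] [DecidableEq W] (T : ℕ)
    (x : (RouteNode W × Fin T) → (RouteNode W × Fin T) → Bool)
    (hcover : ∀ j : W,
      (Finset.univ.filter
        (fun p : (RouteNode W × Fin T) × (RouteNode W × Fin T) =>
          x p.1 p.2 = true ∧ p.2.1 = Sum.inl (Sum.inr j))).card = 1)
    (hflow : ∀ (j : W) (s : Fin T),
      (Finset.univ.filter
        (fun u : RouteNode W × Fin T =>
          x u (Sum.inl (Sum.inr j), s) = true)).card =
      (Finset.univ.filter
        (fun u : RouteNode W × Fin T =>
          x (Sum.inl (Sum.inr j), s) u = true)).card)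
    (htime : ∀ u v, x u v = true → u.2 < v.2)
    (hnoenter0 : ∀ u v, x u v = true → v.1 ≠ Sum.inl (Sum.inl ()))
    (hnoleaveN : ∀ u v, x u v = true → u.1 ≠ Sum.inr ()) :
    ∃ (k : ℕ) (P : Fin k → List (RouteNode W × Fin T)),
      (∀ a, (P a).Nodup) ∧
      (∀ a, (P a).Chain' (fun u v => x u v = true)) ∧
      (∀ a, ∃ v, (P a).head? = some v ∧ v.1 = Sum.inl (Sum.inl ())) ∧
      (∀ a, ∃ v, (P a).getLast? = some v ∧ v.1 = Sum.inr ()) ∧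
      (∀ a b, a ≠ b → ∀ v : RouteNode W × Fin T, v ∈ P a → v ∈ P b →
        v.1 = Sum.inl (Sum.inl ()) ∨ v.1 = Sum.inr ()) ∧
      (∀ u v, x u v = true ↔
        ∃ (a : Fin k) (l₁ l₂ : List (RouteNode W × Fin T)), P a = l₁ ++ u :: v :: l₂) ∧
      (∀ j : W,
        ({v : RouteNode W × Fin T |
            v.1 = Sum.inl (Sum.inr j) ∧ ∃ a, v ∈ P a}).ncard = 1) := by
  classical
  -- Step 1: extract the unique in-edge of each customer
  have main : ∃ (Vj Pred : W → RouteNode W × Fin T),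
      (∀ j, x (Pred j) (Vj j) = true) ∧
      (∀ j, (Vj j).1 = Sum.inl (Sum.inr j)) ∧
      (∀ (j : W) (u z : RouteNode W × Fin T), x u z = true →
        z.1 = Sum.inl (Sum.inr j) → u = Pred j ∧ z = Vj j) := by
    have hc1 : ∀ j : W, ∃ p : (RouteNode W × Fin T) × (RouteNode W × Fin T),
        (x p.1 p.2 = true ∧ p.2.1 = Sum.inl (Sum.inr j)) ∧
        ∀ q : (RouteNode W × Fin T) × (RouteNode W × Fin T),
          x q.1 q.2 = true → q.2.1 = Sum.inl (Sum.inr j) → q = p := by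
      intro j
      obtain ⟨p, hp⟩ := Finset.card_eq_one.mp (hcover j)
      refine ⟨p, ?_, ?_⟩
      · have : p ∈ Finset.univ.filter
            (fun p : (RouteNode W × Fin T) × (RouteNode W × Fin T) =>
              x p.1 p.2 = true ∧ p.2.1 = Sum.inl (Sum.inr j)) := by
          rw [hp]; exact Finset.mem_singleton_self p
        exact (Finset.mem_filter.mp this).2
      · intro q hq1 hq2
        have : q ∈ Finset.univ.filter
            (fun p : (RouteNode W × Fin T) × (RouteNode W × Fin T) =>
              x p.1 p.2 = true ∧ p.2.1 = Sum.inl (Sum.inr j)) :=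
          Finset.mem_filter.mpr ⟨Finset.mem_univ q, hq1, hq2⟩
        rw [hp] at this; exact Finset.mem_singleton.mp this
    choose e he hu using hc1
    exact ⟨fun j => (e j).2, fun j => (e j).1, fun j => (he j).1, fun j => (he j).2,
      fun j u z hx hz => by
        have := hu j (u, z) hx hz
        exact ⟨congrArg Prod.fst this, congrArg Prod.snd this⟩⟩
  obtain ⟨Vj, Pred, hxe, hVlab, huniq⟩ := main
  -- in-degree of Vj j is 1
  have hincard : ∀ j, (Finset.univ.filter
      (fun u : RouteNode W × Fin T => x u (Vj j) = true)).card = 1 := by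
    intro j
    refine Finset.card_eq_one.mpr ⟨Pred j, ?_⟩
    ext u
    simp only [Finset.mem_filter, Finset.mem_univ, true_and, Finset.mem_singleton]
    constructor
    · intro hx; exact (huniq j u (Vj j) hx (hVlab j)).1
    · rintro rfl; exact hxe j
  have hVeq : ∀ j : W, (Sum.inl (Sum.inr j), (Vj j).2) = Vj j := by
    intro j; exact Prod.ext (hVlab j).symm rfl
  -- out-degree of Vj j is 1
  have houtcard : ∀ j, (Finset.univ.filter
      (fun u : RouteNode W × Fin T => x (Vj j) u = true)).card = 1 := by
    intro j
    have h := hflow j (Vj j).2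
    rw [hVeq j] at h
    rw [← h, hincard j]
  have hSex : ∀ j : W, ∃ s : RouteNode W × Fin T,
      x (Vj j) s = true ∧ ∀ u, x (Vj j) u = true → u = s := by
    intro j
    obtain ⟨s, hs⟩ := Finset.card_eq_one.mp (houtcard j)
    refine ⟨s, ?_, ?_⟩
    · have : s ∈ Finset.univ.filter
          (fun u : RouteNode W × Fin T => x (Vj j) u = true) := by
        rw [hs]; exact Finset.mem_singleton_self s
      exact (Finset.mem_filter.mp this).2
    · intro u hx
      have : u ∈ Finset.univ.filter
          (fun u : RouteNode W × Fin T => x (Vj j) u = true) :=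
        Finset.mem_filter.mpr ⟨Finset.mem_univ u, hx⟩
      rw [hs] at this; exact Finset.mem_singleton.mp this
  choose S hxS hSuniq using hSex
  -- any customer node with an out-edge is some Vj
  have hVout : ∀ (z u : RouteNode W × Fin T) (j' : W), x z u = true →
      z.1 = Sum.inl (Sum.inr j') → z = Vj j' := by
    intro z u j' hx hz
    have hz' : z = (Sum.inl (Sum.inr j'), z.2) := Prod.ext hz rfl
    have hfl := hflow j' z.2
    have hpos : 0 < (Finset.univ.filter
        (fun w : RouteNode W × Fin T => x (Sum.inl (Sum.inr j'), z.2) w = true)).card := by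
      refine Finset.card_pos.mpr ⟨u, Finset.mem_filter.mpr ⟨Finset.mem_univ u, ?_⟩⟩
      rw [← hz']; exact hx
    rw [← hfl] at hpos
    obtain ⟨w, hw⟩ := Finset.card_pos.mp hpos
    have hw' := (Finset.mem_filter.mp hw).2
    rw [← hz'] at hw'
    exact (huniq j' w z hw' hz).2
  -- goodness
  have hgoodTarget : ∀ u v : RouteNode W × Fin T, x u v = true →
      v.1 = Sum.inr () ∨ ∃ j, v = Vj j := by
    intro u v hx
    obtain ⟨vl, vt⟩ := v
    rcases vl with (⟨⟩ | j) | ⟨⟩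
    · exact absurd rfl (hnoenter0 u _ hx)
    · exact Or.inr ⟨j, (huniq j u _ hx rfl).2⟩
    · exact Or.inl rfl
  -- the successor function
  obtain ⟨nxt, hnxtV, hnxt_none⟩ :
      ∃ nxt : (RouteNode W × Fin T) → Option (RouteNode W × Fin T),
      (∀ j, nxt (Vj j) = some (S j)) ∧
      (∀ v, (¬ ∃ j, v = Vj j) → nxt v = none) := by
    refine ⟨fun v => if h : ∃ j, v = Vj j then some (S h.choose) else none, ?_, ?_⟩
    · intro j
      have hex : ∃ j', Vj j = Vj j' := ⟨j, rfl⟩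
      show (if h : ∃ j', Vj j = Vj j' then some (S h.choose) else none) = some (S j)
      rw [dif_pos hex]
      have hspec := hex.choose_spec
      have hj : hex.choose = j := by
        have h1 := hVlab j
        rw [hspec, hVlab hex.choose] at h1
        simpa using h1
      rw [hj]
    · intro v hv
      show (if h : ∃ j', v = Vj j' then some (S h.choose) else none) = none
      rw [dif_neg hv]
  have hnxt_x : ∀ v u : RouteNode W × Fin T, nxt v = some u → x v u = true := by
    intro v u h
    by_cases hv : ∃ j, v = Vj j
    · obtain ⟨j, rfl⟩ := hv
      rw [hnxtV j] at h
      rw [← Option.some_inj.mp h]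
      exact hxS j
    · rw [hnxt_none v hv] at h; exact absurd h (by simp)
  have hnxt_lt : ∀ v u : RouteNode W × Fin T, nxt v = some u → v.2 < u.2 :=
    fun v u h => htime v u (hnxt_x v u h)
  -- good predicate and chain facts
  set good : (RouteNode W × Fin T) → Prop :=
    fun v => v.1 = Sum.inr () ∨ ∃ j, v = Vj j with hgood_def
  have hg : ∀ v : RouteNode W × Fin T, good v →
      ∀ u, nxt v = some u → good u :=
    fun v _ u h => hgoodTarget v u (hnxt_x v u h)
  have hstep : ∀ w : RouteNode W × Fin T, good w → w.1 ≠ Sum.inr () →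
      ∃ u, nxt w = some u := by
    intro w hw hN
    rcases hw with hw | ⟨j, rfl⟩
    · exact absurd hw hN
    · exact ⟨S j, hnxtV j⟩
  have hNnone : ∀ v : RouteNode W × Fin T, v.1 = Sum.inr () → nxt v = none := by
    intro v hv
    refine hnxt_none v ?_
    rintro ⟨j, rfl⟩
    rw [hVlab j] at hv; exact absurd hv (by simp)
  -- the list of depot edges
  obtain ⟨L, hLnd, hLmem⟩ :
      ∃ L : List ((RouteNode W × Fin T) × (RouteNode W × Fin T)), L.Nodup ∧
        ∀ p : (RouteNode W × Fin T) × (RouteNode W × Fin T),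
          p ∈ L ↔ (x p.1 p.2 = true ∧ p.1.1 = Sum.inl (Sum.inl ())) := by
    refine ⟨(Finset.univ.filter
      (fun p : (RouteNode W × Fin T) × (RouteNode W × Fin T) =>
        x p.1 p.2 = true ∧ p.1.1 = Sum.inl (Sum.inl ()))).toList,
      Finset.nodup_toList _, ?_⟩
    intro p
    rw [Finset.mem_toList, Finset.mem_filter]
    simp
  -- the paths
  set P : Fin L.length → List (RouteNode W × Fin T) :=
    fun a => (L.get a).1 :: ODIP.chain nxt T (L.get a).2 with hP_def
  have hgetmem : ∀ a : Fin L.length,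
      x (L.get a).1 (L.get a).2 = true ∧ (L.get a).1.1 = Sum.inl (Sum.inl ()) :=
    fun a => (hLmem (L.get a)).mp (L.get_mem a)
  have hgoodv : ∀ a : Fin L.length, good (L.get a).2 :=
    fun a => hgoodTarget _ _ (hgetmem a).1
  -- Vj j is not the head
  have hVne : ∀ (j : W) (a : Fin L.length), Vj j ≠ (L.get a).1 := by
    intro j a h
    have h1 := hVlab j
    rw [h, (hgetmem a).2] at h1
    exact absurd h1 (by simp)
  have hmemchain : ∀ (j : W) (a : Fin L.length), Vj j ∈ P a →
      Vj j ∈ ODIP.chain nxt T (L.get a).2 := by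
    intro j a h
    simp only [hP_def, List.mem_cons] at h
    rcases h with h | h
    · exact absurd h (hVne j a)
    · exact h
  -- key suffix lemma
  have hkey : ∀ (v₀ : RouteNode W × Fin T) (j : W), Vj j ∈ ODIP.chain nxt T v₀ →
      ∃ l₁ l₂, ODIP.chain nxt T v₀ = l₁ ++ Vj j :: S j :: l₂ := by
    intro v₀ j hmem
    obtain ⟨m, l₁, hl, hle⟩ := ODIP.chain_suffix hnxt_lt T v₀ (Vj j) hmem
    have hmpos : 1 ≤ m := by
      have := (Vj j).2.isLt
      omega
    obtain ⟨m', rfl⟩ := Nat.exists_eq_add_of_le hmpos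
    have hc : ODIP.chain nxt (1 + m') (Vj j) = Vj j :: ODIP.chain nxt m' (S j) := by
      have : 1 + m' = m' + 1 := by omega
      rw [this]
      show ODIP.chain nxt (m' + 1) (Vj j) = _
      simp only [ODIP.chain, hnxtV j, Option.elim]
    obtain ⟨t, htc⟩ := ODIP.chain_cons nxt m' (S j)
    rw [hc, htc] at hl
    exact ⟨l₁, t, hl⟩
  have hmem_succ : ∀ (j : W) (a : Fin L.length), Vj j ∈ P a →
      ∃ l₁ l₂, P a = l₁ ++ Vj j :: S j :: l₂ := by
    intro j a h
    obtain ⟨l₁, l₂, hl⟩ := hkey _ j (hmemchain j a h)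
    exact ⟨(L.get a).1 :: l₁, l₂, by simp only [hP_def, hl, List.cons_append]⟩
  -- chains of P a
  have hchainP : ∀ a : Fin L.length,
      List.Chain' (fun u v => x u v = true) (P a) := by
    intro a
    simp only [hP_def]
    obtain ⟨t, htc⟩ := ODIP.chain_cons nxt T (L.get a).2
    have hch := ODIP.chain_chain' hnxt_x T (L.get a).2
    rw [htc] at hch ⊢
    exact List.isChain_cons_cons.mpr ⟨(hgetmem a).1, hch⟩
  -- reachability
  have hreach : ∀ (t : ℕ) (j : W), (Vj j).2.val = t → ∃ a : Fin L.length, Vj j ∈ P a := by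
    intro t
    induction t using Nat.strong_induction_on with
    | _ t ih =>
      intro j hjt
      rcases hPr : Pred j with ⟨(⟨⟩ | j') | ⟨⟩, pt⟩
      · have hPl : (Pred j).1 = Sum.inl (Sum.inl ()) := by rw [hPr]
        have hmemL : (Pred j, Vj j) ∈ L := (hLmem _).mpr ⟨hxe j, hPl⟩
        obtain ⟨a, ha⟩ := List.mem_iff_get.mp hmemL
        refine ⟨a, ?_⟩
        simp only [hP_def, ha]
        exact List.mem_cons_of_mem _ (ODIP.chain_mem_self nxt T (Vj j))
      · have hPl : (Pred j).1 = Sum.inl (Sum.inr j') := by rw [hPr]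
        have hPV : Pred j = Vj j' := hVout (Pred j) (Vj j) j' (hxe j) hPl
        have hlt : (Vj j').2.val < t := by
          have := htime _ _ (hxe j)
          rw [hPV] at this
          omega
        obtain ⟨a, ha⟩ := ih _ hlt j' rfl
        obtain ⟨l₁, l₂, hl⟩ := hmem_succ j' a ha
        have hSj : S j' = Vj j := by
          refine (hSuniq j' (Vj j) ?_).symm
          rw [← hPV]; exact hxe j
        refine ⟨a, ?_⟩
        rw [hl, hSj]
        simp
      · exact absurd (show (Pred j).1 = Sum.inr () by rw [hPr]) (hnoleaveN _ _ (hxe j))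
  -- predecessor-in-path lemma
  have hpredmem : ∀ (j : W) (a : Fin L.length), Vj j ∈ P a →
      (L.get a = (Pred j, Vj j)) ∨ ((∃ j', Pred j = Vj j') ∧ Pred j ∈ P a) := by
    intro j a h
    have hc := hmemchain j a h
    by_cases hv : Vj j = (L.get a).2
    · left
      have := (huniq j (L.get a).1 (L.get a).2 (hgetmem a).1 (by rw [← hv]; exact hVlab j)).1
      exact Prod.ext this hv.symm
    · obtain ⟨m, l₁, hl, _⟩ := ODIP.chain_suffix hnxt_lt T (L.get a).2 (Vj j) hc
      have hne : l₁ ≠ [] := by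
        rintro rfl
        simp only [List.nil_append] at hl
        have h1 := ODIP.chain_head nxt T (L.get a).2
        have h2 := ODIP.chain_head nxt m (Vj j)
        rw [hl, h2] at h1
        exact hv (Option.some_inj.mp h1)
      have hch := ODIP.chain_chain' hnxt_x T (L.get a).2
      rw [hl] at hch
      obtain ⟨-, -, hlast⟩ := List.isChain_append.mp hch
      set y := l₁.getLast hne with hy_def
      have hxy : x y (Vj j) = true := by
        refine hlast y ?_ (Vj j) (ODIP.chain_head nxt m (Vj j))
        rw [List.getLast?_eq_getLast hne]
        simp [hy_def]
      have hyPred : y = Pred j := (huniq j y (Vj j) hxy (hVlab j)).1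
      have hymem : y ∈ ODIP.chain nxt T (L.get a).2 := by
        rw [hl]
        exact List.mem_append_left _ (List.getLast_mem hne)
      have hygood : good y := ODIP.chain_good hg T (hgoodv a) y hymem
      rcases hygood with hyN | hyV
      · exact absurd hyN (hnoleaveN _ _ hxy)
      · right
        refine ⟨by rw [← hyPred]; exact hyV, ?_⟩
        rw [← hyPred]
        simp only [hP_def]
        exact List.mem_cons_of_mem _ hymem
  -- uniqueness of path through a customer
  have hupath : ∀ (t : ℕ) (j : W), (Vj j).2.val = t →
      ∀ a b : Fin L.length, Vj j ∈ P a → Vj j ∈ P b → a = b := by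
    intro t
    induction t using Nat.strong_induction_on with
    | _ t ih =>
      intro j hjt a b ha hb
      have hgetinj : Function.Injective L.get := List.nodup_iff_injective_get.mp hLnd
      rcases hpredmem j a ha with hA | ⟨⟨j', hj'⟩, hA⟩
      · rcases hpredmem j b hb with hB | ⟨⟨j', hj'⟩, hB⟩
        · exact hgetinj (by rw [hA, hB])
        · exfalso
          have h1 := (hgetmem a).2
          rw [hA] at h1
          simp only at h1
          rw [hj', hVlab j'] at h1
          exact absurd h1 (by simp)
      · rcases hpredmem j b hb with hB | ⟨⟨j'', hj''⟩, hB⟩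
        · exfalso
          have h1 := (hgetmem b).2
          rw [hB] at h1
          simp only at h1
          rw [hj', hVlab j'] at h1
          exact absurd h1 (by simp)
        · have hlt : (Vj j').2.val < t := by
            have := htime _ _ (hxe j)
            rw [hj'] at this
            omega
          rw [hj'] at hA
          rw [hj''] at hB
          have hjj : j'' = j' := by
            have := hVlab j'
            rw [← hj', hj'', hVlab j''] at this
            simpa using this
          rw [hjj] at hB
          exact ih _ hlt j' rfl a b hA hB
  -- good elements of paths with customer labels are Vj
  have hpathcust : ∀ (v : RouteNode W × Fin T) (j : W) (a : Fin L.length),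
      v ∈ P a → v.1 = Sum.inl (Sum.inr j) → v = Vj j := by
    intro v j a hv hvl
    simp only [hP_def, List.mem_cons] at hv
    rcases hv with rfl | hv
    · rw [(hgetmem a).2] at hvl
      exact absurd hvl (by simp)
    · have := ODIP.chain_good hg T (hgoodv a) v hv
      rcases this with hN | ⟨j₂, rfl⟩
      · rw [hvl] at hN; exact absurd hN (by simp)
      · have := hVlab j₂
        rw [hvl] at this
        have : j₂ = j := by simpa using this.symm
        rw [this]
  -- assemble
  refine ⟨L.length, P, ?_, hchainP, ?_, ?_, ?_, ?_, ?_⟩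
  · -- Nodup
    intro a
    have hlt : List.Chain' (fun u v : RouteNode W × Fin T => u.2 < v.2) (P a) := by
      simp only [hP_def]
      obtain ⟨t, htc⟩ := ODIP.chain_cons nxt T (L.get a).2
      have hch := ODIP.chain_chain' hnxt_lt T (L.get a).2
      rw [htc] at hch ⊢
      exact List.isChain_cons_cons.mpr ⟨htime _ _ (hgetmem a).1, hch⟩
    haveI : IsTrans (RouteNode W × Fin T) (fun u v => u.2 < v.2) :=
      ⟨fun _ _ _ h1 h2 => h1.trans h2⟩
    have hpw := List.isChain_iff_pairwise.mp hlt
    exact hpw.imp (fun {u v} h => fun he => by rw [he] at h; exact lt_irrefl _ h)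
  · -- head
    intro a
    exact ⟨(L.get a).1, by simp only [hP_def, List.head?_cons], (hgetmem a).2⟩
  · -- last
    intro a
    obtain ⟨w, hw, hwN⟩ := ODIP.chain_getLast hnxt_lt hstep hNnone hg T (L.get a).2
      (hgoodv a) (by omega)
    refine ⟨w, ?_, hwN⟩
    simp only [hP_def]
    obtain ⟨t, htc⟩ := ODIP.chain_cons nxt T (L.get a).2
    rw [htc] at hw ⊢
    rw [List.getLast?_cons_cons, hw]
  · -- disjointness
    intro a b hab v hva hvb
    obtain ⟨vl, vt⟩ := v
    rcases vl with (⟨⟩ | j) | ⟨⟩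
    · exact Or.inl rfl
    · exfalso
      have hVa := hpathcust (Sum.inl (Sum.inr j), vt) j a hva rfl
      rw [hVa] at hva hvb
      exact hab (hupath (Vj j).2.val j rfl a b hva hvb)
    · exact Or.inr rfl
  · -- edge characterization
    intro u v
    constructor
    · intro hx
      obtain ⟨ul, ut⟩ := u
      rcases ul with (⟨⟩ | j) | ⟨⟩
      · have hmemL : ((Sum.inl (Sum.inl ()), ut), v) ∈ L := (hLmem _).mpr ⟨hx, rfl⟩
        obtain ⟨a, ha⟩ := List.mem_iff_get.mp hmemL
        obtain ⟨t, htc⟩ := ODIP.chain_cons nxt T v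
        refine ⟨a, [], t, ?_⟩
        simp only [hP_def, ha, htc, List.nil_append]
      · have huV : (Sum.inl (Sum.inr j), ut) = Vj j :=
          hVout (Sum.inl (Sum.inr j), ut) v j hx rfl
        have hvS : v = S j := by rw [huV] at hx; exact hSuniq j v hx
        obtain ⟨a, ha⟩ := hreach (Vj j).2.val j rfl
        obtain ⟨l₁, l₂, hl⟩ := hmem_succ j a ha
        exact ⟨a, l₁, l₂, by rw [hl, huV, hvS]⟩
      · exact absurd rfl (hnoleaveN (Sum.inr (), ut) v hx)
    · rintro ⟨a, l₁, l₂, hl⟩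
      have hch := hchainP a
      rw [hl] at hch
      obtain ⟨-, hch2, -⟩ := List.isChain_append.mp hch
      exact (List.isChain_cons_cons.mp hch2).1
  · -- customers visited exactly once
    intro j
    have hset : {v : RouteNode W × Fin T |
        v.1 = Sum.inl (Sum.inr j) ∧ ∃ a, v ∈ P a} = {Vj j} := by
      ext v
      simp only [Set.mem_setOf_eq, Set.mem_singleton_iff]
      constructor
      · rintro ⟨hvl, a, hva⟩
        exact hpathcust v j a hva hvl
      · rintro rfl
        obtain ⟨a, ha⟩ := hreach (Vj j).2.val j rfl
        exact ⟨hVlab j, a, ha⟩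
    rw [hset]
    exact Set.ncard_singleton _
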